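/- Let Γ be a positive definite q×q matrix, Δ ∈ ℝ^q, c ∈ ℝ, u > 0, and set D = Γ + Δ Δ^⊤ and λ = D^{-1/2} Δ / √(1 − Δ^⊤ D^{-1} Δ). Then for every b ∈ ℝ^q, ∫_c^∞ 2 φ_1(t; c, u^{-1}) φ_q(b; Δt, u^{-1}Γ) dt = 2 φ_q(b; cΔ, u^{-1}D) Φ(u^{1/2} λ^⊤ D^{-1/2}(b − cΔ)). (That is, if T | U=u follows the normal distribution N(c, u^{-1}) truncated to (c, ∞) and b | T=t, U=u ~ N_q(Δt, u^{-1}Γ), then b | U=u follows the skew-normal distribution SN_q(cΔ, u^{-1}D, λ).) -/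

import Mathlib

open MeasureTheory Matrix Real

/-- Multivariate normal density `φ_k(y; μ, S)`. -/
noncomputable def mvnPdf {k : Type*} [Fintype k] [DecidableEq k]
    (μ : k → ℝ) (S : Matrix k k ℝ) (y : k → ℝ) : ℝ :=
  (2 * Real.pi) ^ (-(Fintype.card k : ℝ) / 2) * S.det ^ (-(1 : ℝ) / 2) *
    Real.exp (-((y - μ) ⬝ᵥ (S⁻¹ *ᵥ (y - μ))) / 2)

/-- Standard univariate normal cumulative distribution function `Φ`. -/
noncomputable def stdCDF (x : ℝ) : ℝ :=
  ∫ t in Set.Iic x, (Real.sqrt (2 * Real.pi))⁻¹ * Real.exp (-t ^ 2 / 2)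

/-- Inverse of the positive definite square root, `S^{-1/2}`. -/
noncomputable def invSqrt {k : Type*} [Fintype k] [DecidableEq k]
    {S : Matrix k k ℝ} (hS : S.PosDef) : Matrix k k ℝ :=
  (hS.posSemidef.1.eigenvectorUnitary.1 * diagonal ((↑) ∘ Real.sqrt ∘ hS.posSemidef.1.eigenvalues) *
    (star hS.posSemidef.1.eigenvectorUnitary : Matrix k k ℝ))⁻¹

/-- Univariate normal density `φ_1(x; m, v)` with mean `m` and variance `v`. -/
noncomputable def normalPdf (m v x : ℝ) : ℝ :=
  (Real.sqrt (2 * Real.pi * v))⁻¹ * Real.exp (-(x - m) ^ 2 / (2 * v))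

lemma integral_comp_add_right_Ioi (g : ℝ → ℝ) (a d : ℝ) :
    ∫ x in Set.Ioi a, g (x + d) = ∫ x in Set.Ioi (a + d), g x := by
  have h : MeasurePreserving (fun x : ℝ => x + d) volume volume :=
    measurePreserving_add_right volume d
  have he : MeasurableEmbedding (fun x : ℝ => x + d) :=
    (Homeomorph.addRight d).measurableEmbedding
  have hpre : (fun x : ℝ => x + d) ⁻¹' Set.Ioi (a + d) = Set.Ioi a := by
    ext x; simp [Set.mem_Ioi]
  rw [← h.setIntegral_preimage_emb he g, hpre]

lemma vecMulVec_mulVec' {q : ℕ} (u v x : Fin q → ℝ) :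
    Matrix.vecMulVec u v *ᵥ x = (v ⬝ᵥ x) • u := by
  ext i
  simp [Matrix.mulVec, Matrix.vecMulVec_apply, dotProduct, Finset.mul_sum, mul_assoc, mul_comm,
    mul_left_comm]

lemma dot_mulVec_symm {q : ℕ} {A : Matrix (Fin q) (Fin q) ℝ} (hA : Aᵀ = A)
    (x y : Fin q → ℝ) : x ⬝ᵥ (A *ᵥ y) = y ⬝ᵥ (A *ᵥ x) := by
  rw [Matrix.dotProduct_mulVec, ← Matrix.mulVec_transpose, hA, dotProduct_comm]


lemma gauss_tail {α : ℝ} (hα : 0 < α) (m c : ℝ) :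
    ∫ t in Set.Ioi c, Real.exp (-(α * (t - m) ^ 2) / 2) =
      Real.sqrt (2 * Real.pi) * (Real.sqrt α)⁻¹ *
        stdCDF (Real.sqrt α * (m - c)) := by
  have hsα : 0 < Real.sqrt α := Real.sqrt_pos.2 hα
  have step1 : ∫ t in Set.Ioi c, Real.exp (-(Real.sqrt α * (t + -m)) ^ 2 / 2) =
      ∫ t in Set.Ioi (c + -m), Real.exp (-(Real.sqrt α * t) ^ 2 / 2) :=
    integral_comp_add_right_Ioi (fun s => Real.exp (-(Real.sqrt α * s) ^ 2 / 2)) c (-m)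
  have step2 : ∫ t in Set.Ioi (c + -m), Real.exp (-(Real.sqrt α * t) ^ 2 / 2) =
      (Real.sqrt α)⁻¹ • ∫ x in Set.Ioi (Real.sqrt α * (c + -m)), Real.exp (-x ^ 2 / 2) :=
    integral_comp_mul_left_Ioi (fun s => Real.exp (-s ^ 2 / 2)) _ hsα
  have step3 := integral_comp_neg_Ioi (Real.sqrt α * (c + -m))
    (fun x => Real.exp (-x ^ 2 / 2))
  simp only [neg_sq] at step3
  have harg : -(Real.sqrt α * (c + -m)) = Real.sqrt α * (m - c) := by ring
  rw [harg] at step3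
  have hexp : ∀ t : ℝ, Real.exp (-(α * (t - m) ^ 2) / 2) =
      Real.exp (-(Real.sqrt α * (t + -m)) ^ 2 / 2) := by
    intro t
    congr 1
    rw [mul_pow, Real.sq_sqrt hα.le]
    ring
  simp_rw [hexp]
  rw [step1, step2, step3]
  have hcdf : stdCDF (Real.sqrt α * (m - c)) =
      (Real.sqrt (2 * Real.pi))⁻¹ *
        ∫ t in Set.Iic (Real.sqrt α * (m - c)), Real.exp (-t ^ 2 / 2) := by
    rw [stdCDF, MeasureTheory.integral_const_mul]
  rw [hcdf, smul_eq_mul]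
  have h2π : Real.sqrt (2 * Real.pi) ≠ 0 :=
    (Real.sqrt_pos.2 (by positivity)).ne'
  field_simp


set_option maxHeartbeats 2000000 in
/-- truncated-normal augmentation: if `T | U=u ~ N(c, u⁻¹)` truncated to
`(c, ∞)` and `b | T=t, U=u ~ N_q(Δt, u⁻¹Γ)`, then `b | U=u ~ SN_q(cΔ, u⁻¹D, λ)` with
`D = Γ + ΔΔᵀ` and `λ = D^{-1/2}Δ/√(1 − ΔᵀD⁻¹Δ)`. -/
theorem truncated_normal_augmentation
    {q : ℕ} (Γ : Matrix (Fin q) (Fin q) ℝ) (hΓ : Γ.PosDef)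
    (Δ : Fin q → ℝ) (c u : ℝ) (hu : 0 < u)
    (D : Matrix (Fin q) (Fin q) ℝ) (hDdef : D = Γ + Matrix.vecMulVec Δ Δ) (hD : D.PosDef)
    (lam : Fin q → ℝ)
    (hlam : lam = (Real.sqrt (1 - Δ ⬝ᵥ (D⁻¹ *ᵥ Δ)))⁻¹ • (invSqrt hD *ᵥ Δ)) :
    ∀ b : Fin q → ℝ,
      (∫ t in Set.Ioi c, 2 * normalPdf c u⁻¹ t * mvnPdf (t • Δ) (u⁻¹ • Γ) b) =
        2 * mvnPdf (c • Δ) (u⁻¹ • D) b *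
          stdCDF (Real.sqrt u * (lam ⬝ᵥ (invSqrt hD *ᵥ (b - c • Δ)))) := by

  intro b
  have hΓd : IsUnit Γ.det := isUnit_iff_ne_zero.2 hΓ.det_pos.ne'
  have hDd : IsUnit D.det := isUnit_iff_ne_zero.2 hD.det_pos.ne'
  -- symmetry facts
  have hΓsymm : Γᵀ = Γ := by
    rw [← Matrix.conjTranspose_eq_transpose_of_trivial]; exact hΓ.1
  have hΓisymm : (Γ⁻¹)ᵀ = Γ⁻¹ := by rw [Matrix.transpose_nonsing_inv, hΓsymm]
  -- abbreviations
  set w : Fin q → ℝ := b - c • Δ with hw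
  set X : Fin q → ℝ := Γ⁻¹ *ᵥ Δ with hX
  set Y : Fin q → ℝ := Γ⁻¹ *ᵥ w with hY
  set g : ℝ := Δ ⬝ᵥ X with hgdef
  set s0 : ℝ := Δ ⬝ᵥ Y with hs0
  set a : ℝ := 1 + g with hadef
  have hg : 0 ≤ g := by
    have := (hΓ.inv.posSemidef.dotProduct_mulVec_nonneg Δ)
    simpa [hgdef, hX] using this
  have ha : 0 < a := by rw [hadef]; linarith
  have hane : a ≠ 0 := ha.ne'
  set m : ℝ := c + s0 / a with hm
  have hcX : Γ *ᵥ X = Δ := by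
    rw [hX, Matrix.mulVec_mulVec, Matrix.mul_nonsing_inv _ hΓd, Matrix.one_mulVec]
  have hcY : Γ *ᵥ Y = w := by
    rw [hY, Matrix.mulVec_mulVec, Matrix.mul_nonsing_inv _ hΓd, Matrix.one_mulVec]
  have hsymm : w ⬝ᵥ X = s0 := by
    rw [hX, hs0, hY, dot_mulVec_symm hΓisymm]
  -- action of D
  have hmulD : ∀ v : Fin q → ℝ, D *ᵥ v = Γ *ᵥ v + (Δ ⬝ᵥ v) • Δ := by
    intro v
    rw [hDdef, Matrix.add_mulVec, vecMulVec_mulVec']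
  have hinv : ∀ v z : Fin q → ℝ, D *ᵥ v = z → D⁻¹ *ᵥ z = v := by
    intro v z h
    rw [← h, Matrix.mulVec_mulVec, Matrix.nonsing_inv_mul _ hDd, Matrix.one_mulVec]
  have hDinvΔ : D⁻¹ *ᵥ Δ = a⁻¹ • X := by
    apply hinv
    rw [Matrix.mulVec_smul, hmulD, hcX, ← hgdef]
    ext i
    simp only [Pi.add_apply, Pi.smul_apply, smul_eq_mul]
    field_simp
    ring
  have hDinvw : D⁻¹ *ᵥ w = Y - (s0 / a) • X := by
    apply hinv
    rw [Matrix.mulVec_sub, Matrix.mulVec_smul, hmulD, hmulD, hcX, hcY,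
      ← hgdef, ← hs0]
    ext i
    simp only [Pi.add_apply, Pi.sub_apply, Pi.smul_apply, smul_eq_mul]
    field_simp
    ring
  -- scalar facts
  have hgd : Δ ⬝ᵥ (D⁻¹ *ᵥ Δ) = g / a := by
    rw [hDinvΔ, dotProduct_smul, ← hgdef, smul_eq_mul]
    ring
  have h1m : 1 - Δ ⬝ᵥ (D⁻¹ *ᵥ Δ) = a⁻¹ := by
    rw [hgd]
    field_simp
    rw [hadef]
    ring
  have hds : Δ ⬝ᵥ (D⁻¹ *ᵥ w) = s0 / a := by
    rw [hDinvw, dotProduct_sub, dotProduct_smul, ← hs0, ← hgdef, smul_eq_mul]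
    field_simp
    rw [hadef]
    ring
  set Qv : ℝ := w ⬝ᵥ (D⁻¹ *ᵥ w) with hQv
  have hQ : Qv = w ⬝ᵥ Y - s0 ^ 2 / a := by
    rw [hQv, hDinvw, dotProduct_sub, dotProduct_smul, hsymm, smul_eq_mul]
    ring
  -- determinant fact
  have hdet : D.det = a * Γ.det := by
    have h1 : Γ + Matrix.replicateCol (Fin 1) Δ * Matrix.replicateRow (Fin 1) Δ
        = Γ * (1 + Γ⁻¹ * (Matrix.replicateCol (Fin 1) Δ * Matrix.replicateRow (Fin 1) Δ)) := by
      rw [Matrix.mul_add, Matrix.mul_one, ← Matrix.mul_assoc,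
        Matrix.mul_nonsing_inv _ hΓd, Matrix.one_mul]
    have h2 : Γ⁻¹ * (Matrix.replicateCol (Fin 1) Δ * Matrix.replicateRow (Fin 1) Δ)
        = Matrix.replicateCol (Fin 1) X * Matrix.replicateRow (Fin 1) Δ := by
      rw [← Matrix.mul_assoc, ← Matrix.replicateCol_mulVec, ← hX]
    rw [hDdef, show Matrix.vecMulVec Δ Δ = Matrix.replicateCol (Fin 1) Δ * Matrix.replicateRow (Fin 1) Δ from
      Matrix.vecMulVec_eq (Fin 1) Δ Δ, h1, h2, Matrix.det_mul,
      show Matrix.det ((1 : Matrix (Fin q) (Fin q) ℝ) + Matrix.replicateCol (Fin 1) X *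
        Matrix.replicateRow (Fin 1) Δ) = 1 + Δ ⬝ᵥ X from
        Matrix.det_one_add_replicateCol_mul_replicateRow X Δ, ← hgdef, hadef]
    ring
  -- invSqrt facts
  have hSsymm : (hD.posSemidef.1.eigenvectorUnitary.1 * diagonal ((↑) ∘ Real.sqrt ∘ hD.posSemidef.1.eigenvalues) *
      (star hD.posSemidef.1.eigenvectorUnitary : Matrix (Fin q) (Fin q) ℝ))ᵀ =
      hD.posSemidef.1.eigenvectorUnitary.1 * diagonal ((↑) ∘ Real.sqrt ∘ hD.posSemidef.1.eigenvalues) *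
      (star hD.posSemidef.1.eigenvectorUnitary : Matrix (Fin q) (Fin q) ℝ) := by
    simp only [Matrix.star_eq_conjTranspose, Matrix.conjTranspose_eq_transpose_of_trivial,
      Matrix.transpose_mul, Matrix.transpose_transpose, Matrix.diagonal_transpose, Matrix.mul_assoc]
  have hSS' : (hD.posSemidef.1.eigenvectorUnitary.1 * diagonal ((↑) ∘ Real.sqrt ∘ hD.posSemidef.1.eigenvalues) *
      (star hD.posSemidef.1.eigenvectorUnitary : Matrix (Fin q) (Fin q) ℝ)) *
      (hD.posSemidef.1.eigenvectorUnitary.1 * diagonal ((↑) ∘ Real.sqrt ∘ hD.posSemidef.1.eigenvalues) *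
      (star hD.posSemidef.1.eigenvectorUnitary : Matrix (Fin q) (Fin q) ℝ)) = D := by
    have hU : (star hD.posSemidef.1.eigenvectorUnitary : Matrix (Fin q) (Fin q) ℝ) *
        hD.posSemidef.1.eigenvectorUnitary.1 = 1 := Unitary.star_mul_self_of_mem hD.posSemidef.1.eigenvectorUnitary.2
    have hdd : diagonal ((↑) ∘ Real.sqrt ∘ hD.posSemidef.1.eigenvalues) *
        diagonal ((↑) ∘ Real.sqrt ∘ hD.posSemidef.1.eigenvalues) =
        diagonal (RCLike.ofReal ∘ hD.posSemidef.1.eigenvalues : Fin q → ℝ) := by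
      rw [Matrix.diagonal_mul_diagonal]
      congr 1; funext i
      simp [Real.mul_self_sqrt (hD.posSemidef.eigenvalues_nonneg i)]
    conv_rhs => rw [hD.posSemidef.1.spectral_theorem, Unitary.conjStarAlgAut_apply]
    simp only [Matrix.mul_assoc]
    rw [← Matrix.mul_assoc (star _ : Matrix _ _ ℝ) _ (diagonal _ * _), hU, Matrix.one_mul,
      ← Matrix.mul_assoc (diagonal _) (diagonal _), hdd]
  have hAT : (invSqrt hD)ᵀ = invSqrt hD := by
    rw [invSqrt, Matrix.transpose_nonsing_inv, hSsymm]
  have hSS : invSqrt hD * invSqrt hD = D⁻¹ := by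
    rw [invSqrt, ← Matrix.mul_inv_rev, hSS']
  have hlamdot : lam ⬝ᵥ (invSqrt hD *ᵥ w) = Real.sqrt a * (s0 / a) := by
    have h1 : (invSqrt hD *ᵥ Δ) ⬝ᵥ (invSqrt hD *ᵥ w) = Δ ⬝ᵥ (D⁻¹ *ᵥ w) := by
      rw [← hSS, ← Matrix.mulVec_mulVec, Matrix.dotProduct_mulVec Δ,
        ← Matrix.mulVec_transpose, hAT]
    rw [hlam, smul_dotProduct, h1m, smul_eq_mul, h1, hds, Real.sqrt_inv, inv_inv]
  -- smul inverse matrices and determinants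
  have hu' : u ≠ 0 := hu.ne'
  have hGinv : (u⁻¹ • Γ)⁻¹ = u • Γ⁻¹ := by
    apply Matrix.inv_eq_right_inv
    rw [Matrix.smul_mul, Matrix.mul_smul, Matrix.mul_nonsing_inv _ hΓd, smul_smul,
      inv_mul_cancel₀ hu', one_smul]
  have hDinvS : (u⁻¹ • D)⁻¹ = u • D⁻¹ := by
    apply Matrix.inv_eq_right_inv
    rw [Matrix.smul_mul, Matrix.mul_smul, Matrix.mul_nonsing_inv _ hDd, smul_smul,
      inv_mul_cancel₀ hu', one_smul]
  have hdetG : (0:ℝ) < (u⁻¹ • Γ).det := by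
    rw [Matrix.det_smul]
    exact mul_pos (pow_pos (inv_pos.2 hu) _) hΓ.det_pos
  have hdetD : (u⁻¹ • D).det = a * (u⁻¹ • Γ).det := by
    rw [Matrix.det_smul, Matrix.det_smul, hdet]
    ring
  -- quadratic identity
  have hbt : ∀ t : ℝ, b - t • Δ = w - (t - c) • Δ := by
    intro t
    rw [hw]
    ext i
    simp only [Pi.sub_apply, Pi.smul_apply, smul_eq_mul]
    ring
  have hquadv : ∀ t : ℝ, (b - t • Δ) ⬝ᵥ (Γ⁻¹ *ᵥ (b - t • Δ))
      = w ⬝ᵥ Y - 2 * (t - c) * s0 + (t - c) ^ 2 * g := by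
    intro t
    rw [hbt t, Matrix.mulVec_sub, Matrix.mulVec_smul, ← hY, ← hX]
    simp only [dotProduct_sub, sub_dotProduct, dotProduct_smul, smul_dotProduct, smul_eq_mul]
    rw [hsymm, ← hs0, ← hgdef]
    ring
  -- exponential identity
  have hexpid : ∀ t : ℝ,
      Real.exp (-(t - c) ^ 2 / (2 * u⁻¹)) *
        Real.exp (-((b - t • Δ) ⬝ᵥ ((u⁻¹ • Γ)⁻¹ *ᵥ (b - t • Δ))) / 2)
      = Real.exp (-(u * Qv) / 2) * Real.exp (-(u * a * (t - m) ^ 2) / 2) := by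
    intro t
    rw [← Real.exp_add, ← Real.exp_add]
    congr 1
    rw [hGinv, Matrix.smul_mulVec, dotProduct_smul, smul_eq_mul, hquadv t, hQ, hm]
    field_simp
    ring
  -- pointwise integrand identity
  set K : ℝ := 2 * (Real.sqrt (2 * Real.pi * u⁻¹))⁻¹ *
      ((2 * Real.pi) ^ (-(q : ℝ) / 2) * ((u⁻¹ • Γ).det) ^ (-(1 : ℝ) / 2)) *
      Real.exp (-(u * Qv) / 2) with hK
  have hInt : ∀ t : ℝ, 2 * normalPdf c u⁻¹ t * mvnPdf (t • Δ) (u⁻¹ • Γ) b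
      = K * Real.exp (-(u * a * (t - m) ^ 2) / 2) := by
    intro t
    rw [normalPdf, mvnPdf, hK]
    simp only [Fintype.card_fin]
    linear_combination (2 * (Real.sqrt (2 * Real.pi * u⁻¹))⁻¹ *
      ((2 * Real.pi) ^ (-(q : ℝ) / 2) * ((u⁻¹ • Γ).det) ^ (-(1 : ℝ) / 2))) * hexpid t
  -- integrate
  have hα : 0 < u * a := mul_pos hu ha
  calc ∫ t in Set.Ioi c, 2 * normalPdf c u⁻¹ t * mvnPdf (t • Δ) (u⁻¹ • Γ) b
      = ∫ t in Set.Ioi c, K * Real.exp (-(u * a * (t - m) ^ 2) / 2) := by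
        simp_rw [hInt]
    _ = K * ∫ t in Set.Ioi c, Real.exp (-(u * a * (t - m) ^ 2) / 2) :=
        MeasureTheory.integral_const_mul K _
    _ = K * (Real.sqrt (2 * Real.pi) * (Real.sqrt (u * a))⁻¹ *
          stdCDF (Real.sqrt (u * a) * (m - c))) := by rw [gauss_tail hα m c]
    _ = 2 * mvnPdf (c • Δ) (u⁻¹ • D) b *
          stdCDF (Real.sqrt u * (lam ⬝ᵥ (invSqrt hD *ᵥ w))) := by
        have harg : Real.sqrt (u * a) * (m - c) =
            Real.sqrt u * (lam ⬝ᵥ (invSqrt hD *ᵥ w)) := by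
          rw [hlamdot, Real.sqrt_mul hu.le, hm]
          ring
        rw [harg, mvnPdf]
        simp only [Fintype.card_fin]
        rw [← hw, hDinvS, Matrix.smul_mulVec, dotProduct_smul, smul_eq_mul, ← hQv]
        rw [hK]
        -- constants
        have hrpow : ∀ x : ℝ, 0 < x → x ^ (-(1:ℝ)/2) = (Real.sqrt x)⁻¹ := by
          intro x hx
          rw [Real.sqrt_eq_rpow, ← Real.rpow_neg hx.le]
          norm_num
        have hdD : ((u⁻¹ • D).det) ^ (-(1:ℝ)/2)
            = (Real.sqrt a)⁻¹ * (Real.sqrt ((u⁻¹ • Γ).det))⁻¹ := by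
          rw [hdetD, hrpow _ (by positivity), Real.sqrt_mul ha.le, mul_inv]
        have hdG' : ((u⁻¹ • Γ).det) ^ (-(1:ℝ)/2) = (Real.sqrt ((u⁻¹ • Γ).det))⁻¹ :=
          hrpow _ hdetG
        rw [hdD, hdG', Real.sqrt_mul (by positivity : (0:ℝ) ≤ 2 * Real.pi),
          Real.sqrt_inv, Real.sqrt_mul hu.le]
        have h2π : Real.sqrt (2 * Real.pi) ≠ 0 := (Real.sqrt_pos.2 (by positivity)).ne'
        have hsu : Real.sqrt u ≠ 0 := (Real.sqrt_pos.2 hu).ne'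
        have hsa : Real.sqrt a ≠ 0 := (Real.sqrt_pos.2 ha).ne'
        have hsd : Real.sqrt ((u⁻¹ • Γ).det) ≠ 0 := (Real.sqrt_pos.2 hdetG).ne'
        have hcc : (Real.sqrt (2 * Real.pi) * (Real.sqrt u)⁻¹)⁻¹ *
            (Real.sqrt (2 * Real.pi) * (Real.sqrt u * Real.sqrt a)⁻¹) = (Real.sqrt a)⁻¹ := by
          rw [mul_inv, inv_inv, mul_inv]
          field_simp
        linear_combination (2 * (2 * Real.pi) ^ (-(q : ℝ) / 2) *
          (Real.sqrt ((u⁻¹ • Γ).det))⁻¹ * Real.exp (-(u * Qv) / 2) *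
          stdCDF (Real.sqrt u * (lam ⬝ᵥ (invSqrt hD *ᵥ (b - c • Δ))))) * hcc
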